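/- Let ω, Ω ⊂ ℝ² be two planar domains with ω ⊆ Ω. Set r = 1/h(ω) and R = 1/h(Ω), and assume that the inner Cheeger formula holds for both: |ω^r| = π r² and |Ω^R| = π R². Then 0 ≤ R − r ≤ |Ω^r \ ω^r| / (2π r). -/
import Mathlib


open MeasureTheory Metric Set ENNReal

/-- Divergence of a vector field on `ℝ²`. -/
noncomputable def vdiv (φ : EuclideanSpace ℝ (Fin 2) → EuclideanSpace ℝ (Fin 2))
    (x : EuclideanSpace ℝ (Fin 2)) : ℝ :=
  ∑ i : Fin 2, fderiv ℝ φ x (EuclideanSpace.single i 1) i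

/-- Relative (distributional) perimeter of `E` in the open set `A`. -/
noncomputable def perimeterIn (E A : Set (EuclideanSpace ℝ (Fin 2))) : ℝ≥0∞ :=
  ⨆ (φ : EuclideanSpace ℝ (Fin 2) → EuclideanSpace ℝ (Fin 2)) (_ : ContDiff ℝ 1 φ)
    (_ : HasCompactSupport φ) (_ : tsupport φ ⊆ A) (_ : ∀ x, ‖φ x‖ ≤ 1),
    ENNReal.ofReal (∫ x in E, vdiv φ x)

noncomputable def perimeter (E : Set (EuclideanSpace ℝ (Fin 2))) : ℝ≥0∞ :=
  perimeterIn E Set.univ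

noncomputable def cheegerConst (Ω : Set (EuclideanSpace ℝ (Fin 2))) : ℝ≥0∞ :=
  ⨅ (F : Set (EuclideanSpace ℝ (Fin 2))) (_ : MeasurableSet F) (_ : F ⊆ Ω)
    (_ : 0 < volume F), perimeter F / volume F

/-- The inner parallel set `Ω^r = {x ∈ Ω : dist(x, ∂Ω) ≥ r}`. -/
def innerPar (Ω : Set (EuclideanSpace ℝ (Fin 2))) (r : ℝ) : Set (EuclideanSpace ℝ (Fin 2)) :=
  {x ∈ Ω | r ≤ Metric.infDist x (frontier Ω)}

theorem inner_cheeger_error_estimate (ω Ω : Set (EuclideanSpace ℝ (Fin 2)))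
    (hωo : IsOpen ω) (hωb : Bornology.IsBounded ω) (hωc : IsConnected ω)
    (hΩo : IsOpen Ω) (hΩb : Bornology.IsBounded Ω) (hΩc : IsConnected Ω)
    (hsub : ω ⊆ Ω) (r R : ℝ) (hr0 : 0 < r)
    (hr : ENNReal.ofReal r = (cheegerConst ω)⁻¹)
    (hR : ENNReal.ofReal R = (cheegerConst Ω)⁻¹)
    (hif1 : volume (innerPar ω r) = ENNReal.ofReal (Real.pi * r ^ 2))
    (hif2 : volume (innerPar Ω R) = ENNReal.ofReal (Real.pi * R ^ 2)) :
    0 ≤ R - r ∧ R - r ≤ (volume (innerPar Ω r \ innerPar ω r)).toReal / (2 * Real.pi * r) := by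
  -- Monotonicity of the Cheeger constant
  have hmono : cheegerConst Ω ≤ cheegerConst ω := by
    refine le_iInf fun F => le_iInf fun hF => le_iInf fun hFω => le_iInf fun hFpos => ?_
    exact iInf_le_of_le F (iInf_le_of_le hF (iInf_le_of_le (hFω.trans hsub)
      (iInf_le_of_le hFpos le_rfl)))
  have hinv : ENNReal.ofReal r ≤ ENNReal.ofReal R := by
    rw [hr, hR]; exact ENNReal.inv_le_inv' hmono
  have hR0 : 0 < R := by
    by_contra h
    push_neg at h
    rw [ENNReal.ofReal_eq_zero.mpr h] at hinv
    simp only [le_zero_iff, ENNReal.ofReal_eq_zero] at hinv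
    linarith
  have hrR : r ≤ R := (ENNReal.ofReal_le_ofReal_iff hR0.le).mp hinv
  -- Ω ≠ univ
  have hΩuniv : Ω ≠ Set.univ := fun h => NormedSpace.unbounded_univ ℝ _ (h ▸ hΩb)
  have hωuniv : ω ≠ Set.univ := fun h => NormedSpace.unbounded_univ ℝ _ (h ▸ hωb)
  -- frontier Ω is nonempty
  have hfrΩ : (frontier Ω).Nonempty := by
    obtain ⟨x, hx⟩ := hΩc.nonempty
    obtain ⟨y, hy, -⟩ := exists_mem_frontier_infDist_compl_eq_dist hx hΩuniv
    exact ⟨y, hy⟩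
  -- innerPar ω r ⊆ innerPar Ω r
  have hAB : innerPar ω r ⊆ innerPar Ω r := by
    rintro x ⟨hxω, hxd⟩
    refine ⟨hsub hxω, ?_⟩
    obtain ⟨y, hy, hxy⟩ := exists_mem_frontier_infDist_compl_eq_dist hxω hωuniv
    have h1 : r ≤ infDist x ωᶜ := by
      rw [hxy]; exact le_trans hxd (infDist_le_dist_of_mem hy)
    have h2 : infDist x ωᶜ ≤ infDist x Ωᶜ :=
      infDist_le_infDist_of_subset (compl_subset_compl.mpr hsub)
        (nonempty_compl.mpr hΩuniv)
    have h3 : infDist x Ωᶜ ≤ infDist x (frontier Ω) := by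
      refine infDist_le_infDist_of_subset ?_ hfrΩ
      rw [hΩo.frontier_eq]
      exact diff_subset_compl _ _
    linarith
  -- innerPar Ω R ⊆ innerPar Ω r
  have hCB : innerPar Ω R ⊆ innerPar Ω r := fun x hx => ⟨hx.1, le_trans hrR hx.2⟩
  -- measurability
  have hmB : MeasurableSet (innerPar Ω r) := by
    have : innerPar Ω r = Ω ∩ {x | r ≤ infDist x (frontier Ω)} := rfl
    rw [this]
    exact hΩo.measurableSet.inter
      (measurableSet_le measurable_const (continuous_infDist_pt _).measurable)
  have hmA : MeasurableSet (innerPar ω r) := by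
    have : innerPar ω r = ω ∩ {x | r ≤ infDist x (frontier ω)} := rfl
    rw [this]
    exact hωo.measurableSet.inter
      (measurableSet_le measurable_const (continuous_infDist_pt _).measurable)
  -- finiteness
  have hBfin : volume (innerPar Ω r) < ⊤ :=
    lt_of_le_of_lt (measure_mono (fun x hx => hx.1)) hΩb.measure_lt_top
  have hDfin : volume (innerPar Ω r \ innerPar ω r) < ⊤ :=
    lt_of_le_of_lt (measure_mono diff_subset) hBfin
  -- volume of C ≤ volume of (B \ A) + volume of A
  have hsplit : volume (innerPar Ω R) ≤
      volume (innerPar Ω r \ innerPar ω r) + volume (innerPar ω r) := by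
    refine le_trans (measure_mono ?_) (measure_union_le _ _)
    intro x hx
    by_cases h : x ∈ innerPar ω r
    · exact Or.inr h
    · exact Or.inl ⟨hCB hx, h⟩
  have hπ := Real.pi_pos
  have key : Real.pi * R ^ 2 ≤ (volume (innerPar Ω r \ innerPar ω r)).toReal
      + Real.pi * r ^ 2 := by
    have := ENNReal.toReal_mono (by
        rw [ENNReal.add_ne_top]
        exact ⟨hDfin.ne, by rw [hif1]; exact ENNReal.ofReal_ne_top⟩) hsplit
    rw [hif2, ENNReal.toReal_add hDfin.ne (by rw [hif1]; exact ENNReal.ofReal_ne_top),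
      hif1, ENNReal.toReal_ofReal (by positivity), ENNReal.toReal_ofReal (by positivity)]
      at this
    exact this
  constructor
  · linarith
  · rw [le_div_iff₀ (by positivity)]
    nlinarith [sq_nonneg (R - r)]
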